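/- A finite monounary algebra (A, f) has minimal spectrum if and only if f is a constant function or f is an isocyclic permutation (a permutation whose cycle type is (1, a, a, ..., a) for some a ≥ 1, i.e., one fixed point and all other cycles of a common length a, or the identity). -/

import Mathlib

structure MSignature where
  ops : Type
  arity : ops → ℕ

inductive MTerm (σ : MSignature) (k : ℕ) : Type where
  | var : Fin k → MTerm σ k
  | app : (f : σ.ops) → (Fin (σ.arity f) → MTerm σ k) → MTerm σ k

def MTerm.eval {σ : MSignature} {A : Type*}
    (interp : (f : σ.ops) → (Fin (σ.arity f) → A) → A) {k : ℕ} :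
    MTerm σ k → (Fin k → A) → A
  | .var i, x => x i
  | .app f ts, x => interp f fun i => (ts i).eval interp x

/-- Probability of the equation `t ≈ t'` in the algebra `(A, interp)`. -/
noncomputable def eqProb {σ : MSignature} (A : Type*)
    (interp : (f : σ.ops) → (Fin (σ.arity f) → A) → A) {k : ℕ}
    (t t' : MTerm σ k) : ℚ :=
  (Nat.card {x : Fin k → A // t.eval interp x = t'.eval interp x} : ℚ) /
    (Nat.card A : ℚ) ^ k

/-- The equational probability spectrum of the algebra `(A, interp)`. -/
noncomputable def PSpecA {σ : MSignature} (A : Type*)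
    (interp : (f : σ.ops) → (Fin (σ.arity f) → A) → A) : Set ℚ :=
  { q | ∃ (k : ℕ) (t t' : MTerm σ k), q = eqProb A interp t t' }

/-- `(A, interp)` has minimal spectrum: every equation has probability `1` or `1/|A|`. -/
def MinimalSpectrum {σ : MSignature} (A : Type*)
    (interp : (f : σ.ops) → (Fin (σ.arity f) → A) → A) : Prop :=
  ∀ (k : ℕ) (t t' : MTerm σ k),
    eqProb A interp t t' = 1 ∨ eqProb A interp t t' = 1 / (Nat.card A : ℚ)

/-- The signature of groupoids: one binary operation. -/
@[reducible] def grpdSig : MSignature := ⟨Unit, fun _ => 2⟩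

def grpdInterp {A : Type*} (mul : A → A → A) :
    (f : grpdSig.ops) → (Fin (grpdSig.arity f) → A) → A :=
  fun _ x => mul (x 0) (x 1)

/-- A permutation is isocyclic if it is the identity or has cycle type `(1, a, …, a)`. -/
def IsIsocyclic {A : Type*} (f : A → A) : Prop :=
  Function.Bijective f ∧
    (f = id ∨ ∃ a, 1 < a ∧ (∃! x, f x = x) ∧
      ∀ x, f x ≠ x → Function.minimalPeriod f x = a)

@[reducible] def unarySig : MSignature := ⟨Unit, fun _ => 1⟩

def unaryInterp {A : Type*} (f : A → A) :
    (g : unarySig.ops) → (Fin (unarySig.arity g) → A) → A :=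
  fun _ x => f (x 0)


section helpers
variable {A : Type*} [Fintype A]

open Function

lemma card_subtype_all {p : A → Prop} [DecidablePred p]
    (h : Nat.card {x : A // p x} = Nat.card A) : ∀ x, p x := by
  intro x
  simp only [Nat.card_eq_fintype_card] at h
  rw [Fintype.card_subtype] at h
  have h2 := Finset.eq_univ_of_card _ h
  have hx : x ∈ Finset.univ.filter p := by rw [h2]; exact Finset.mem_univ x
  exact (Finset.mem_filter.mp hx).2

def splitEquiv1 {k : ℕ} (i : Fin k) (P : A → Prop) :
    {x : Fin k → A // P (x i)} ≃ {a : A // P a} × ({l : Fin k // l ≠ i} → A) where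
  toFun x := (⟨x.1 i, x.2⟩, fun l => x.1 l.1)
  invFun p := ⟨fun l => if h : l = i then p.1.1 else p.2 ⟨l, h⟩, by simp [p.1.2]⟩
  left_inv x := by
    apply Subtype.ext; funext l
    by_cases h : l = i <;> simp [h]
  right_inv p := by
    refine Prod.ext (Subtype.ext ?_) (funext fun l => ?_)
    · simp
    · simp [l.2]

lemma card_one {k : ℕ} (i : Fin k) (P : A → Prop) :
    Nat.card {x : Fin k → A // P (x i)} =
      Nat.card {a : A // P a} * Nat.card A ^ (k - 1) := by
  classical
  rw [Nat.card_congr (splitEquiv1 i P), Nat.card_prod, Nat.card_fun]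
  congr 2
  rw [Nat.card_eq_fintype_card]
  have : Fintype.card {l : Fin k // l ≠ i} = Fintype.card (Fin k) - 1 := by
    simp [Fintype.card_subtype_compl, Fintype.card_subtype_eq]
  simpa using this

def splitEquiv2 {k : ℕ} {i j : Fin k} (hij : i ≠ j) (P : A → A → Prop) :
    {x : Fin k → A // P (x i) (x j)} ≃
      {p : A × A // P p.1 p.2} × ({l : Fin k // l ≠ i ∧ l ≠ j} → A) where
  toFun x := (⟨(x.1 i, x.1 j), x.2⟩, fun l => x.1 l.1)
  invFun p := ⟨fun l => if h : l = i then p.1.1.1 else if h' : l = j then p.1.1.2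
      else p.2 ⟨l, h, h'⟩, by simp [hij.symm, p.1.2]⟩
  left_inv x := by
    apply Subtype.ext; funext l
    by_cases h : l = i
    · simp [h]
    · by_cases h' : l = j <;> simp [h, h', hij.symm]
  right_inv p := by
    refine Prod.ext (Subtype.ext ?_) (funext fun l => ?_)
    · simp [hij.symm]
    · simp [l.2.1, l.2.2]

lemma card_two {k : ℕ} {i j : Fin k} (hij : i ≠ j) (P : A → A → Prop) :
    Nat.card {x : Fin k → A // P (x i) (x j)} =
      Nat.card {p : A × A // P p.1 p.2} * Nat.card A ^ (k - 2) := by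
  classical
  rw [Nat.card_congr (splitEquiv2 hij P), Nat.card_prod, Nat.card_fun]
  congr 2
  rw [Nat.card_eq_fintype_card]
  have e : {l : Fin k // l ≠ i ∧ l ≠ j} ≃ {l : Fin k // ¬ (l = i ∨ l = j)} :=
    Equiv.subtypeEquivRight (by tauto)
  rw [Fintype.card_congr e, Fintype.card_subtype_compl]
  have : Fintype.card {l : Fin k // l = i ∨ l = j} = 2 := by
    rw [Fintype.card_subtype]
    have : (Finset.univ.filter fun l => l = i ∨ l = j) = {i, j} := by
      ext l; simp
    rw [this, Finset.card_pair hij]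
  simp [this]

end helpers

section terms
variable {A : Type*} [Fintype A] [Nonempty A] (f : A → A)

def tpow {k : ℕ} (i : Fin k) : ℕ → MTerm unarySig k
  | 0 => .var i
  | r+1 => .app () (fun _ => tpow i r)

lemma tpow_eval {k : ℕ} (i : Fin k) (r : ℕ) (x : Fin k → A) :
    (tpow i r).eval (unaryInterp f) x = f^[r] (x i) := by
  induction r with
  | zero => rfl
  | succ r ih => simp [tpow, MTerm.eval, unaryInterp, ih, Function.iterate_succ_apply']

lemma term_form {k : ℕ} (t : MTerm unarySig k) :
    ∃ r i, ∀ x : Fin k → A, t.eval (unaryInterp f) x = f^[r] (x i) := by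
  induction t with
  | var i => exact ⟨0, i, fun _ => rfl⟩
  | app g ts ih =>
    obtain ⟨r, i, h⟩ := ih 0
    exact ⟨r + 1, i, fun x => by
      simp [MTerm.eval, unaryInterp, h, Function.iterate_succ_apply']⟩

end terms
section probs
variable {A : Type*} [Fintype A] [Nonempty A] (f : A → A)

lemma ncard_pos : (0:ℚ) < (Nat.card A : ℚ) := by
  have : 0 < Nat.card A := Nat.card_pos
  exact_mod_cast this

noncomputable def Ncard (r s : ℕ) : ℕ := Nat.card {a : A // f^[r] a = f^[s] a}
noncomputable def Mcard (r s : ℕ) : ℕ := Nat.card {p : A × A // f^[r] p.1 = f^[s] p.2}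

lemma eqProb_eq {k : ℕ} (t t' : MTerm unarySig k) (r s : ℕ) (i j : Fin k)
    (ht : ∀ x, t.eval (unaryInterp f) x = f^[r] (x i))
    (ht' : ∀ x, t'.eval (unaryInterp f) x = f^[s] (x j)) :
    eqProb A (unaryInterp f) t t' =
      (Nat.card {x : Fin k → A // f^[r] (x i) = f^[s] (x j)} : ℚ) / (Nat.card A : ℚ)^k := by
  unfold eqProb
  congr 2
  exact Nat.card_congr (Equiv.subtypeEquivRight fun x => by rw [ht, ht'])

lemma card_one' {A : Type*} [Fintype A] {k : ℕ} (i : Fin k) (g h : A → A) :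
    Nat.card {x : Fin k → A // g (x i) = h (x i)} =
      Nat.card {a : A // g a = h a} * Nat.card A ^ (k-1) :=
  card_one i (fun a => g a = h a)

lemma card_two' {A : Type*} [Fintype A] {k : ℕ} {i j : Fin k} (hij : i ≠ j) (g h : A → A) :
    Nat.card {x : Fin k → A // g (x i) = h (x j)} =
      Nat.card {p : A × A // g p.1 = h p.2} * Nat.card A ^ (k-2) :=
  card_two hij (fun a b => g a = h b)

lemma eqProb_case_same {k : ℕ} (i : Fin k) (r s : ℕ) :
    (Nat.card {x : Fin k → A // f^[r] (x i) = f^[s] (x i)} : ℚ) / (Nat.card A : ℚ)^k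
      = (Ncard f r s : ℚ) / (Nat.card A : ℚ) := by
  unfold Ncard
  rw [card_one' i (f^[r]) (f^[s])]
  have hk : k - 1 + 1 = k := Nat.succ_pred_eq_of_pos i.pos
  have hn := ncard_pos (A := A)
  push_cast
  rw [show ((Nat.card A:ℚ))^k = (Nat.card A:ℚ) * (Nat.card A:ℚ)^(k-1) by
        rw [← pow_succ', hk],
    mul_div_mul_right _ _ (by positivity)]

lemma eqProb_case_diff {k : ℕ} {i j : Fin k} (hij : i ≠ j) (r s : ℕ) :
    (Nat.card {x : Fin k → A // f^[r] (x i) = f^[s] (x j)} : ℚ) / (Nat.card A : ℚ)^k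
      = (Mcard f r s : ℚ) / (Nat.card A : ℚ)^2 := by
  unfold Mcard
  rw [card_two' hij (f^[r]) (f^[s])]
  have hk2 : 2 ≤ k := by
    by_contra h
    push_neg at h
    interval_cases k <;> [exact absurd i.pos (by simp); exact hij (Subsingleton.elim i j)]
  have hk : k - 2 + 2 = k := Nat.sub_add_cancel hk2
  have hn := ncard_pos (A := A)
  push_cast
  rw [show ((Nat.card A:ℚ))^k = (Nat.card A:ℚ)^2 * (Nat.card A:ℚ)^(k-2) by
        rw [← pow_add, show 2 + (k-2) = k by omega],
    mul_div_mul_right _ _ (by positivity)]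

lemma MS_iff :
    MinimalSpectrum A (unaryInterp f) ↔
      ((∀ r s, Ncard f r s = Nat.card A ∨ Ncard f r s = 1) ∧
       (∀ r s, Mcard f r s = Nat.card A ^ 2 ∨ Mcard f r s = Nat.card A)) := by
  have hn := ncard_pos (A := A)
  have hn' : (Nat.card A : ℚ) ≠ 0 := hn.ne'
  constructor
  · intro h
    constructor
    · intro r s
      have h1 := h 1 (tpow (0 : Fin 1) r) (tpow 0 s)
      rw [eqProb_eq f _ _ r s 0 0 (tpow_eval f 0 r) (tpow_eval f 0 s),
        eqProb_case_same] at h1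
      rcases h1 with h1 | h1
      · left
        rw [div_eq_one_iff_eq hn'] at h1
        exact_mod_cast h1
      · right
        rw [div_eq_div_iff hn' hn'] at h1
        have : (Ncard f r s : ℚ) = 1 := by
          field_simp at h1; exact_mod_cast h1
        exact_mod_cast this
    · intro r s
      have h1 := h 2 (tpow (0 : Fin 2) r) (tpow 1 s)
      rw [eqProb_eq f _ _ r s 0 1 (tpow_eval f 0 r) (tpow_eval f 1 s),
        eqProb_case_diff f (by decide) r s] at h1
      rcases h1 with h1 | h1
      · left
        rw [div_eq_one_iff_eq (by positivity)] at h1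
        exact_mod_cast h1
      · right
        rw [div_eq_div_iff (by positivity) hn'] at h1
        have : (Mcard f r s : ℚ) = Nat.card A := by
          rw [pow_two] at h1
          field_simp at h1
          rw [Nat.card_eq_fintype_card]
          rw [← Nat.card_eq_fintype_card]
          exact_mod_cast h1
        exact_mod_cast this
  · rintro ⟨hN, hM⟩ k t t'
    obtain ⟨r, i, ht⟩ := term_form f t
    obtain ⟨s, j, ht'⟩ := term_form f t'
    rw [eqProb_eq f t t' r s i j ht ht']
    by_cases hij : i = j
    · subst hij
      rw [eqProb_case_same]
      rcases hN r s with h | h <;> rw [h]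
      · left; exact div_self hn'
      · right; norm_num
    · rw [eqProb_case_diff f hij]
      rcases hM r s with h | h <;> rw [h]
      · left; push_cast; exact div_self (by positivity)
      · right
        push_cast
        rw [pow_two, div_mul_eq_div_div, div_self hn']
end probs
section main
variable {A : Type*} [Fintype A] [Nonempty A]

open Function

lemma card_all {p : A → Prop} (h : ∀ x, p x) :
    Nat.card {x : A // p x} = Nat.card A :=
  Nat.card_congr (Equiv.subtypeUnivEquiv h)

lemma card_fixed_one {c : A} : Nat.card {a : A // a = c} = 1 := by
  classical
  rw [Nat.card_eq_fintype_card, Fintype.card_subtype_eq]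

lemma card_fixed_one' {c : A} : Nat.card {a : A // c = a} = 1 := by
  classical
  rw [Nat.card_eq_fintype_card, Fintype.card_subtype_eq']

lemma card_sub_congr {α : Type*} {p q : α → Prop} (h : ∀ x, p x ↔ q x) :
    Nat.card {x : α // p x} = Nat.card {x : α // q x} :=
  Nat.card_congr (Equiv.subtypeEquivRight h)

/-- constant functions give the two card conditions -/
lemma const_N (f : A → A) (c : A) (hc : ∀ x, f x = c) (r s : ℕ) :
    Ncard f r s = Nat.card A ∨ Ncard f r s = 1 := by
  have hit : ∀ (r : ℕ) (x : A), f^[r+1] x = c := fun r x => by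
    rw [Function.iterate_succ_apply']; exact hc _
  unfold Ncard
  match r, s with
  | 0, 0 => exact Or.inl (card_all fun x => rfl)
  | 0, s+1 =>
    right
    rw [card_sub_congr (q := fun a => a = c) (fun x => by simp [hit s x])]
    exact card_fixed_one
  | r+1, 0 =>
    right
    rw [card_sub_congr (q := fun a => c = a) (fun x => by simp [hit r x])]
    exact card_fixed_one'
  | r+1, s+1 => exact Or.inl (card_all fun x => by rw [hit, hit])

noncomputable def diagEquiv (f g : A → A) (hg : Function.Bijective g) :
    {p : A × A // f p.1 = g p.2} ≃ A where
  toFun p := p.1.1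
  invFun a := ⟨(a, (Equiv.ofBijective g hg).symm (f a)),
    ((Equiv.ofBijective g hg).apply_symm_apply (f a)).symm⟩
  left_inv p := Subtype.ext (Prod.ext rfl ((Equiv.symm_apply_eq _).mpr (by exact p.2)))
  right_inv a := rfl

lemma card_diag (f g : A → A) (hg : Function.Bijective g) :
    Nat.card {p : A × A // f p.1 = g p.2} = Nat.card A :=
  Nat.card_congr (diagEquiv f g hg)

def fstEquiv (Q : A → Prop) : {p : A × A // Q p.1} ≃ {a : A // Q a} × A where
  toFun p := (⟨p.1.1, p.2⟩, p.1.2)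
  invFun q := ⟨(q.1.1, q.2), q.1.2⟩
  left_inv p := rfl
  right_inv q := rfl

def sndEquiv (Q : A → Prop) : {p : A × A // Q p.2} ≃ {a : A // Q a} × A where
  toFun p := (⟨p.1.2, p.2⟩, p.1.1)
  invFun q := ⟨(q.2, q.1.1), q.1.2⟩
  left_inv p := rfl
  right_inv q := rfl

lemma card_fst (Q : A → Prop) :
    Nat.card {p : A × A // Q p.1} = Nat.card {a : A // Q a} * Nat.card A := by
  rw [Nat.card_congr (fstEquiv Q), Nat.card_prod]

lemma card_snd (Q : A → Prop) :
    Nat.card {p : A × A // Q p.2} = Nat.card {a : A // Q a} * Nat.card A := by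
  rw [Nat.card_congr (sndEquiv Q), Nat.card_prod]

lemma const_M (f : A → A) (c : A) (hc : ∀ x, f x = c) (r s : ℕ) :
    Mcard f r s = Nat.card A ^ 2 ∨ Mcard f r s = Nat.card A := by
  have hit : ∀ (r : ℕ) (x : A), f^[r+1] x = c := fun r x => by
    rw [Function.iterate_succ_apply']; exact hc _
  unfold Mcard
  match r, s with
  | 0, 0 =>
    right
    exact card_diag f^[0] f^[0] (by rw [Function.iterate_zero]; exact Function.bijective_id)
  | 0, s+1 =>
    right
    have h1 : Nat.card {p : A × A // f^[0] p.1 = f^[s+1] p.2}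
        = Nat.card {p : A × A // p.1 = c} :=
      card_sub_congr fun p => by simp [hit s p.2]
    rw [h1, show Nat.card {p : A × A // p.1 = c}
        = Nat.card {a : A // a = c} * Nat.card A from card_fst (fun a => a = c),
      card_fixed_one, one_mul]
  | r+1, 0 =>
    right
    have h1 : Nat.card {p : A × A // f^[r+1] p.1 = f^[0] p.2}
        = Nat.card {p : A × A // c = p.2} :=
      card_sub_congr fun p => by simp [hit r p.1]
    rw [h1, show Nat.card {p : A × A // c = p.2}
        = Nat.card {a : A // c = a} * Nat.card A from card_snd (fun a => c = a),
      card_fixed_one', one_mul]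
  | r+1, s+1 =>
    left
    have : Nat.card {p : A × A // f^[r+1] p.1 = f^[s+1] p.2} = Nat.card (A × A) :=
      Nat.card_congr (Equiv.subtypeUnivEquiv fun p => by rw [hit, hit])
    rw [this, Nat.card_prod, sq]

lemma iso_M (f : A → A) (hb : Function.Bijective f) (r s : ℕ) :
    Mcard f r s = Nat.card A ^ 2 ∨ Mcard f r s = Nat.card A :=
  Or.inr (card_diag f^[r] f^[s] (hb.iterate s))

/-- Fixed point counts for isocyclic permutations -/
lemma iso_fix (f : A → A) (e : A) (he : ∀ y, f y = y → y = e) (hee : f e = e)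
    (ha : ∀ x y, f x ≠ x → f y ≠ y → minimalPeriod f x = minimalPeriod f y)
    (d : ℕ) :
    Nat.card {z : A // f^[d] z = z} = Nat.card A ∨
      Nat.card {z : A // f^[d] z = z} = 1 := by
  classical
  by_cases hall : ∀ z, f^[d] z = z
  · exact Or.inl (card_all hall)
  · right
    push_neg at hall
    obtain ⟨x0, hx0⟩ := hall
    have hd : d ≠ 0 := by rintro rfl; exact hx0 rfl
    have key : ∀ y, f^[d] y = y ↔ y = e := by
      intro y
      constructor
      · intro hy
        by_contra hne
        have hfy : f y ≠ y := fun h => hne (he y h)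
        have hdvd : minimalPeriod f y ∣ d :=
          Function.IsPeriodicPt.minimalPeriod_dvd hy
        have hfx0 : f x0 ≠ x0 := by
          intro h
          exact hx0 ((Function.IsFixedPt.iterate h d))
        have : Function.IsPeriodicPt f d x0 := by
          rw [Function.isPeriodicPt_iff_minimalPeriod_dvd, ha x0 y hfx0 hfy]
          exact hdvd
        exact hx0 this
      · rintro rfl
        exact Function.IsFixedPt.iterate hee d
    rw [card_sub_congr key]
    exact card_fixed_one

lemma iso_N (f : A → A) (hb : Function.Bijective f) (hiso : IsIsocyclic f) (r s : ℕ) :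
    Ncard f r s = Nat.card A ∨ Ncard f r s = 1 := by
  -- reduce to fixed point counts
  have symm : ∀ r s : ℕ, Ncard f r s = Ncard f s r := fun r s =>
    card_sub_congr fun x => eq_comm
  have red : ∀ r s : ℕ, r ≤ s → Ncard f r s = Nat.card {z : A // f^[s-r] z = z} := by
    intro r s hrs
    unfold Ncard
    apply card_sub_congr
    intro x
    have h1 : f^[s] x = f^[r] (f^[s-r] x) := by
      rw [← Function.iterate_add_apply, Nat.add_sub_cancel' hrs]
    rw [h1]
    constructor
    · intro h
      exact ((hb.iterate r).injective h).symm
    · intro h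
      rw [h]
  rcases hiso.2 with hid | ⟨a, ha1, ⟨e, hee, hue⟩, hper⟩
  · left
    subst hid
    exact card_all fun x => by simp
  · have hfix : ∀ d, Nat.card {z : A // f^[d] z = z} = Nat.card A ∨
        Nat.card {z : A // f^[d] z = z} = 1 := by
      apply iso_fix f e (fun y hy => hue y hy) hee
      intro x y hx hy
      rw [hper x hx, hper y hy]
    rcases le_total r s with h | h
    · rw [red r s h]; exact hfix _
    · rw [symm, red s r h]; exact hfix _

end main
section forward
variable {A : Type*} [Fintype A] [Nonempty A]
open Function

lemma card_eq_one_unique {p : A → Prop} (h : Nat.card {x : A // p x} = 1) :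
    ∃! x, p x := by
  classical
  rw [Nat.card_eq_fintype_card, Fintype.card_eq_one_iff] at h
  obtain ⟨⟨z, hz⟩, hall⟩ := h
  exact ⟨z, hz, fun y hy => congrArg Subtype.val (hall ⟨y, hy⟩)⟩

lemma perm_pow_iterate (f : A → A) (hb : Bijective f) (n : ℕ) :
    ∀ x, (Equiv.ofBijective f hb ^ n) x = f^[n] x := by
  induction n with
  | zero => intro x; rfl
  | succ n ih =>
    intro x
    rw [pow_succ, Equiv.Perm.mul_apply, Function.iterate_succ_apply]
    exact ih (f x)

lemma all_periodic (f : A → A) (hb : Bijective f) : ∃ m, 0 < m ∧ ∀ x, f^[m] x = x := by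
  classical
  refine ⟨orderOf (Equiv.ofBijective f hb), orderOf_pos _, fun x => ?_⟩
  have h := pow_orderOf_eq_one (Equiv.ofBijective f hb)
  rw [← perm_pow_iterate f hb, h]
  rfl

lemma forward_dir (f : A → A)
    (hN : ∀ r s, Ncard f r s = Nat.card A ∨ Ncard f r s = 1)
    (hM : ∀ r s, Mcard f r s = Nat.card A ^ 2 ∨ Mcard f r s = Nat.card A) :
    (∃ c, ∀ x, f x = c) ∨ IsIsocyclic f := by
  classical
  rcases hM 1 1 with h | h
  · left
    unfold Mcard at h
    have hall : ∀ p : A × A, f^[1] p.1 = f^[1] p.2 := by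
      apply card_subtype_all (p := fun p : A × A => f^[1] p.1 = f^[1] p.2)
      rw [h, Nat.card_prod, sq]
    exact ⟨f (Classical.arbitrary A), fun x => by
      simpa using hall (x, Classical.arbitrary A)⟩
  · have hinj : Injective f := by
      intro x y hxy
      by_contra hne
      have key : Function.Injective (fun z : A ⊕ Unit =>
          (Sum.elim (fun a => (⟨(a, a), rfl⟩ : {p : A × A // f^[1] p.1 = f^[1] p.2}))
            (fun _ => ⟨(x, y), by simpa using hxy⟩) z)) := by
        rintro (a | u) (b | v) hzz <;>
          simp only [Sum.elim_inl, Sum.elim_inr, Subtype.mk.injEq, Prod.mk.injEq] at hzz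
        · rw [hzz.1]
        · exact absurd (hzz.1.symm.trans hzz.2) hne
        · exact absurd (hzz.1.trans hzz.2.symm) hne
        · rw [Subsingleton.elim u v]
      have hle := Nat.card_le_card_of_injective _ key
      unfold Mcard at h
      rw [Nat.card_sum, h] at hle
      have : Nat.card Unit = 1 := Nat.card_unique
      omega
    have hb : Bijective f := Finite.injective_iff_bijective.mp hinj
    by_cases hid : f = id
    · exact Or.inr ⟨hb, Or.inl hid⟩
    right
    refine ⟨hb, Or.inr ?_⟩
    have hfix : ∃! x, f x = x := by
      rcases hN 1 0 with h1 | h1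
      · exfalso
        apply hid
        unfold Ncard at h1
        have h2 := card_subtype_all (p := fun a : A => f^[1] a = f^[0] a) h1
        funext z
        simpa using h2 z
      · unfold Ncard at h1
        obtain ⟨z, hz, hu⟩ := card_eq_one_unique h1
        exact ⟨z, by simpa using hz, fun y hy => hu y (by simpa using hy)⟩
    obtain ⟨e, he, hue⟩ := hfix
    obtain ⟨m, hm, hmfix⟩ := all_periodic f hb
    have hper_pos : ∀ x : A, 0 < minimalPeriod f x := fun x =>
      Function.IsPeriodicPt.minimalPeriod_pos hm (hmfix x)
    have key : ∀ x, f x ≠ x → ∀ y, f^[minimalPeriod f x] y = y := by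
      intro x hx
      rcases hN (minimalPeriod f x) 0 with h1 | h1
      · unfold Ncard at h1
        have h2 := card_subtype_all
          (p := fun a : A => f^[minimalPeriod f x] a = f^[0] a) h1
        intro y
        simpa using h2 y
      · exfalso
        unfold Ncard at h1
        obtain ⟨z, hz, hu⟩ := card_eq_one_unique h1
        have hxz : x = z := hu x (by
          simp only [Function.iterate_zero, id]
          exact isPeriodicPt_minimalPeriod f x)
        have hez : e = z := hu e (by
          simp only [Function.iterate_zero, id]
          exact Function.IsFixedPt.iterate he (minimalPeriod f x))
        exact hx (by rw [hxz, ← hez]; exact he)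
    obtain ⟨x0, hx0⟩ : ∃ x, f x ≠ x := by
      by_contra hall
      push_neg at hall
      exact hid (funext hall)
    refine ⟨minimalPeriod f x0, ?_, ⟨e, he, hue⟩, ?_⟩
    · have h0 := hper_pos x0
      have h1 : minimalPeriod f x0 ≠ 1 := fun h =>
        hx0 (Function.minimalPeriod_eq_one_iff_isFixedPt.mp h)
      omega
    · intro x hx
      have d1 : minimalPeriod f x ∣ minimalPeriod f x0 :=
        Function.IsPeriodicPt.minimalPeriod_dvd (key x0 hx0 x)
      have d2 : minimalPeriod f x0 ∣ minimalPeriod f x :=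
        Function.IsPeriodicPt.minimalPeriod_dvd (key x hx x0)
      exact Nat.dvd_antisymm d1 d2

end forward

theorem stmt5 {A : Type*} [Fintype A] [Nonempty A] (f : A → A) :
    MinimalSpectrum A (unaryInterp f) ↔ ((∃ c, ∀ x, f x = c) ∨ IsIsocyclic f) := by
  rw [MS_iff]
  constructor
  · rintro ⟨hN, hM⟩
    exact forward_dir f hN hM
  · rintro (⟨c, hc⟩ | hiso)
    · exact ⟨const_N f c hc, const_M f c hc⟩
    · exact ⟨iso_N f hiso.1 hiso, fun r s => iso_M f hiso.1 r s⟩
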